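/- Let R be a normal domain containing the rational numbers, and let S be a domain that is a finite extension of R. Then R is a direct summand of S as an R-module, a splitting being given by the normalized trace (1/[Frac(S):Frac(R)])·Tr. -/

import Mathlib

open FractionRing Module nonZeroDivisors

section Aux
variable (R S : Type*) [CommRing R] [IsDomain R]
    [IsNoetherianRing R] [IsIntegrallyClosed R] [Algebra ℚ R]
    [CommRing S] [IsDomain S] [Algebra R S] [NoZeroSMulDivisors R S] [Module.Finite R S]

attribute [local instance] FractionRing.liftAlgebra

lemma aux_isLoc : IsLocalization (Algebra.algebraMapSubmonoid S R⁰) (FractionRing S) := by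
  haveI : Algebra.IsIntegral R S := Algebra.IsIntegral.of_finite R S
  have hinj : Function.Injective (algebraMap S (FractionRing S)) :=
    IsFractionRing.injective S (FractionRing S)
  have hRS : Function.Injective (algebraMap R S) := FaithfulSMul.algebraMap_injective R S
  refine ⟨⟨?_, ?_, ?_⟩⟩
  · rintro ⟨_, r, hr, rfl⟩
    have : algebraMap R S r ≠ 0 := fun h => nonZeroDivisors.ne_zero hr (hRS (by simpa using h))
    simpa [isUnit_iff_ne_zero, map_eq_zero_iff _ hinj]
  · intro z
    obtain ⟨⟨s, t⟩, rfl⟩ := IsLocalization.mk'_surjective S⁰ z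
    obtain ⟨r, hr, u, hu⟩ :=
      ((Algebra.IsIntegral.isIntegral (R := R) (t : S)).isAlgebraic).exists_nonzero_dvd t.2
    refine ⟨⟨s * u, ⟨algebraMap R S r, r, mem_nonZeroDivisors_of_ne_zero hr, rfl⟩⟩, ?_⟩
    simp only [hu, map_mul, ← mul_assoc, IsLocalization.mk'_spec]
  · intro x y h
    exact ⟨1, by simpa using hinj h⟩

lemma aux_fd : FiniteDimensional (FractionRing R) (FractionRing S) := by
  haveI := aux_isLoc R S
  exact Module.Finite.of_isLocalization R S (Rₚ := FractionRing R) (Sₚ := FractionRing S) R⁰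

set_option synthInstance.maxHeartbeats 400000 in
noncomputable def auxTrace : S →ₗ[R] R :=
  haveI := aux_fd R S
  haveI : Algebra.IsIntegral R S := Algebra.IsIntegral.of_finite R S
  (IsIntegralClosure.equiv R (integralClosure R (FractionRing R)) (FractionRing R) R).toLinearMap.comp
    ((((Algebra.trace (FractionRing R) (FractionRing S)).restrictScalars R).comp
      (IsScalarTower.toAlgHom R S (FractionRing S)).toLinearMap).codRestrict
        (Subalgebra.toSubmodule <| integralClosure R (FractionRing R)) (fun x ↦ Algebra.isIntegral_trace
          ((Algebra.IsIntegral.isIntegral (R := R) x).algebraMap)))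

lemma auxTrace_spec (x : S) :
    algebraMap R (FractionRing R) (auxTrace R S x) =
      Algebra.trace (FractionRing R) (FractionRing S) (algebraMap S (FractionRing S) x) := by
  unfold auxTrace
  exact IsIntegralClosure.algebraMap_equiv R (integralClosure R (FractionRing R)) (FractionRing R) R _

end Aux

attribute [local instance] FractionRing.liftAlgebra

theorem normal_domain_char_zero_splits (R S : Type*) [CommRing R] [IsDomain R]
    [IsNoetherianRing R] [IsIntegrallyClosed R] [Algebra ℚ R]
    [CommRing S] [IsDomain S] [Algebra R S] [NoZeroSMulDivisors R S] [Module.Finite R S] :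
    ∃ lam : S →ₗ[R] R, lam 1 = 1 ∧
      ∀ s : S, algebraMap R (FractionRing R) (lam s) =
        (finrank (FractionRing R) (FractionRing S) : FractionRing R)⁻¹ *
          Algebra.trace (FractionRing R) (FractionRing S)
            (algebraMap S (FractionRing S) s) := by
  haveI := aux_fd R S
  set K := FractionRing R
  set L := FractionRing S
  set n := finrank K L with hn
  have hinjRK : Function.Injective (algebraMap R K) := IsFractionRing.injective R K
  haveI : CharZero R := charZero_of_injective_algebraMap (algebraMap ℚ R).injective
  haveI : CharZero K := charZero_of_injective_algebraMap hinjRK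
  have hnpos : 0 < n := finrank_pos
  have hn0 : (n : ℚ) ≠ 0 := Nat.cast_ne_zero.mpr hnpos.ne'
  refine ⟨(n : ℚ)⁻¹ • auxTrace R S, ?_, ?_⟩
  · have h1 : auxTrace R S 1 = (n : R) := by
      apply hinjRK
      rw [auxTrace_spec, map_one, show (1 : L) = algebraMap K L 1 from (map_one _).symm,
        Algebra.trace_algebraMap, map_natCast, nsmul_eq_mul, mul_one]
    have : ((n : ℚ)⁻¹ • auxTrace R S) 1 = (n : ℚ)⁻¹ • (n : R) := by
      rw [LinearMap.smul_apply, h1]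
    rw [this]
    rw [show ((n : R) : R) = (n : ℚ) • (1 : R) by
      rw [Algebra.smul_def, mul_one, map_natCast]]
    rw [smul_smul, inv_mul_cancel₀ hn0, one_smul]
  · intro s
    have key : algebraMap R K (algebraMap ℚ R (n : ℚ)⁻¹) = ((n : K))⁻¹ := by
      refine (inv_eq_of_mul_eq_one_right ?_).symm
      rw [← map_natCast (algebraMap R K) n, ← map_natCast (algebraMap ℚ R) n, ← map_mul,
        ← map_mul, mul_inv_cancel₀ hn0, map_one, map_one]
    rw [LinearMap.smul_apply, Algebra.smul_def, map_mul, key, auxTrace_spec]
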